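/- Let I be a standard dyadic n-partition of [0,1]. Then the number of intervals A ∈ S_R(I) with s(A) = +1 equals one plus the number of breakpoints a of I with 0 < a < 1 whose sign is −1 (the sign of a being s(m^{-1}(a))). -/

import Mathlib

/-- `IsSD l r` means `[l, r]` is a standard dyadic interval
`[k/2^m, (k+1)/2^m] ⊆ [0,1]` with `m ≥ 0`, `0 ≤ k ≤ 2^m - 1`. -/
def IsSD (l r : ℚ) : Prop :=
  ∃ m k : ℕ, k < 2 ^ m ∧ l = (k : ℚ) / 2 ^ m ∧ r = ((k : ℚ) + 1) / 2 ^ m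

/-- A left standard dyadic interval: `[k/2^m, (k+1)/2^m]` with `m ≥ 1` and `k` even. -/
def IsLeftSD (l r : ℚ) : Prop :=
  ∃ m k : ℕ, 1 ≤ m ∧ k < 2 ^ m ∧ Even k ∧
    l = (k : ℚ) / 2 ^ m ∧ r = ((k : ℚ) + 1) / 2 ^ m

/-- A right standard dyadic interval: `[k/2^m, (k+1)/2^m]` with `m ≥ 1` and `k` odd;
by convention `[0,1]` is also regarded as a right standard dyadic interval. -/
def IsRightSD (l r : ℚ) : Prop :=
  (l = 0 ∧ r = 1) ∨
    ∃ m k : ℕ, 1 ≤ m ∧ k < 2 ^ m ∧ Odd k ∧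
      l = (k : ℚ) / 2 ^ m ∧ r = ((k : ℚ) + 1) / 2 ^ m

/-- The set `S` of all standard dyadic intervals, an interval `[l, r]` being
represented by the pair `(l, r)` of its endpoints. -/
def SDSet : Set (ℚ × ℚ) := {A | IsSD A.1 A.2}

/-- The conjugate `Ā` of a standard dyadic interval `A ≠ [0,1]`:
the adjacent standard dyadic interval of the same length, on the right of `A`
if `A` is left, and on the left of `A` if `A` is right. -/
noncomputable def conjSD (A : ℚ × ℚ) : ℚ × ℚ := by
  classical
  exact if IsLeftSD A.1 A.2 then (A.2, 2 * A.2 - A.1) else (2 * A.1 - A.2, A.1)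

/-- The union of two overlapping or adjacent closed intervals, as an interval:
from the smaller left endpoint to the larger right endpoint.  In particular
`sdJoin A (conjSD A)` represents the interval `A ∪ Ā`. -/
def sdJoin (A B : ℚ × ℚ) : ℚ × ℚ := (min A.1 B.1, max A.2 B.2)

/-- A standard dyadic `n`-partition of `[0,1]`: breakpoints
`0 = a_0 < a_1 < ... < a_n = 1` with every `[a_i, a_{i+1}]` a standard dyadic
interval. -/
structure SDPartition (n : ℕ) where
  pts : Fin (n + 1) → ℚ
  first : pts 0 = 0
  last : pts (Fin.last n) = 1
  mono : StrictMono pts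
  sd : ∀ i : Fin n, IsSD (pts i.castSucc) (pts i.succ)

/-- `S(I)`: the set of intervals `[a_i, a_j]` (`i < j`) with endpoints breakpoints
of `I` that are standard dyadic intervals. -/
def SIn {n : ℕ} (I : SDPartition n) : Set (ℚ × ℚ) :=
  {A | (∃ i j : Fin (n + 1), i < j ∧ A = (I.pts i, I.pts j)) ∧ IsSD A.1 A.2}

/-- The midpoint of an interval. -/
def midQ (A : ℚ × ℚ) : ℚ := (A.1 + A.2) / 2

/-- The length of an interval. -/
def lenQ (A : ℚ × ℚ) : ℚ := A.2 - A.1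

/-- `E`: the set of dyadic rationals strictly between 0 and 1. -/
def Edyadic : Set ℚ := {q | ∃ m k : ℕ, 1 ≤ k ∧ k < 2 ^ m ∧ q = (k : ℚ) / 2 ^ m}

/-- `S_L(I) = S(I) ∩ S_L`. -/
def SLIn {n : ℕ} (I : SDPartition n) : Set (ℚ × ℚ) := {A ∈ SIn I | IsLeftSD A.1 A.2}

/-- `S_R(I) = S(I) ∩ S_R`. -/
def SRIn {n : ℕ} (I : SDPartition n) : Set (ℚ × ℚ) := {A ∈ SIn I | IsRightSD A.1 A.2}

/-- `M(I)`: the set of midpoints of the subintervals of `I`. -/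
def MIn {n : ℕ} (I : SDPartition n) : Set ℚ :=
  {q | ∃ i : Fin n, q = midQ (I.pts i.castSucc, I.pts i.succ)}

/-- `E(I)`: the union of `M(I)` with the breakpoints of `I` other than 0 and 1. -/
def EIn {n : ℕ} (I : SDPartition n) : Set ℚ :=
  MIn I ∪ {q | (∃ i : Fin (n + 1), I.pts i = q) ∧ q ≠ 0 ∧ q ≠ 1}

/-- `SignSpec s` says that `s` takes values in `{+1, -1}` on standard dyadic
intervals, `s([0,1]) = +1`, and for `A ≠ [0,1]`, `s A = s (A ∪ Ā)` if `A` is a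
left interval while `s A = - s (A ∪ Ā)` if `A` is a right interval. -/
def SignSpec (s : ℚ × ℚ → ℤ) : Prop :=
  (∀ A ∈ SDSet, s A = 1 ∨ s A = -1) ∧
  s ((0 : ℚ), (1 : ℚ)) = 1 ∧
  ∀ A ∈ SDSet, A ≠ ((0 : ℚ), (1 : ℚ)) →
    (IsLeftSD A.1 A.2 → s A = s (sdJoin A (conjSD A))) ∧
    (IsRightSD A.1 A.2 → s A = - s (sdJoin A (conjSD A)))


/- Auxiliary lemmas -/

lemma two_pow_pos (m : ℕ) : (0:ℚ) < 2 ^ m := by positivity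

lemma pow_inj_q {m m' : ℕ} (h : (2:ℚ)^m = 2^m') : m = m' := by
  have : ((2^m : ℕ) : ℚ) = ((2^m' : ℕ) : ℚ) := by push_cast; exact h
  exact Nat.pow_right_injective (by norm_num) (Nat.cast_injective this)

/-- uniqueness of the (m,k) representation of an s.d. interval -/
lemma rep_unique {m k m' k' : ℕ} (h1 : (k:ℚ)/2^m = (k':ℚ)/2^m')
    (h2 : ((k:ℚ)+1)/2^m = ((k':ℚ)+1)/2^m') : m = m' ∧ k = k' := by
  have e1 := h1; have e2 := h2
  rw [div_eq_div_iff (by positivity) (by positivity)] at e1 e2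
  have hm : (2:ℚ)^m = 2^m' := by nlinarith [e1, e2]
  have hmm := pow_inj_q hm
  subst hmm
  field_simp at e1
  exact ⟨rfl, by exact_mod_cast e1⟩
/-- if `o` is odd and `2^m ∣ o * 2^u` then `m ≤ u` -/
lemma pow_le_of_odd_mul {o u m : ℕ} (ho : Odd o) (h : 2 ^ m ∣ o * 2 ^ u) :
    m ≤ u := by
  have hc : Nat.Coprime (2 ^ m) o :=
    Nat.Coprime.pow_left _ (Nat.coprime_two_left.mpr ho)
  have h2 : 2 ^ m ∣ 2 ^ u := (Nat.Coprime.dvd_of_dvd_mul_left hc h)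
  exact (Nat.pow_dvd_pow_iff_le_right (by norm_num)).mp h2

/-- odd * 2^u = odd' * 2^m forces equal exponents and equal odd parts -/
lemma odd_mul_pow_inj {o o' u m : ℕ} (ho : Odd o) (ho' : Odd o')
    (h : o * 2 ^ u = o' * 2 ^ m) : u = m ∧ o = o' := by
  have h1 : m ≤ u := pow_le_of_odd_mul ho ⟨o', by linarith [h]⟩
  have h2 : u ≤ m := pow_le_of_odd_mul ho' ⟨o, by linarith [h]⟩
  have : u = m := le_antisymm h2 h1
  subst this
  refine ⟨rfl, ?_⟩
  have hp : 0 < 2 ^ u := (by positivity)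
  exact Nat.eq_of_mul_eq_mul_right hp h
/-- clear denominators: fraction equality over ℚ to equation over ℕ -/
lemma frac_eq_nat {a b x y : ℕ} (h : (a:ℚ)/2^x = (b:ℚ)/2^y) :
    a * 2 ^ y = b * 2 ^ x := by
  rw [div_eq_div_iff (by positivity) (by positivity)] at h
  exact_mod_cast h

lemma IsSD.lt {l r : ℚ} (h : IsSD l r) : l < r := by
  obtain ⟨m, k, hk, rfl, rfl⟩ := h
  have := two_pow_pos m
  rw [div_lt_div_iff₀ this this]
  nlinarith

lemma IsSD.nonneg {l r : ℚ} (h : IsSD l r) : 0 ≤ l := by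
  obtain ⟨m, k, hk, rfl, rfl⟩ := h
  positivity

lemma IsSD.le_one {l r : ℚ} (h : IsSD l r) : r ≤ 1 := by
  obtain ⟨m, k, hk, rfl, rfl⟩ := h
  rw [div_le_one (two_pow_pos m)]
  have : (k:ℚ) + 1 ≤ ((2^m : ℕ) : ℚ) := by exact_mod_cast hk
  simpa using this

/-- an interval cannot be both left and right s.d. -/
lemma not_left_and_right {l r : ℚ} (hl : IsLeftSD l r) (hr : IsRightSD l r) :
    False := by
  obtain ⟨m, k, hm1, hk, hke, rfl, rfl⟩ := hl
  rcases hr with ⟨h0, h1⟩ | ⟨m', k', hm1', hk', hko, hl', hr'⟩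
  · have hk0 : (k:ℚ) = 0 := by
      field_simp at h0; exact_mod_cast h0
    have : k = 0 := by exact_mod_cast hk0
    subst this
    rw [div_eq_one_iff_eq (by positivity)] at h1
    have : (2:ℚ)^m = 2^0 := by simpa using h1.symm
    have := pow_inj_q this
    omega
  · obtain ⟨-, hkk⟩ := rep_unique hl' hr'
    subst hkk
    exact (Nat.not_even_iff_odd.mpr hko) hke

/-- uniqueness of the s.d. interval with a given midpoint -/
lemma sd_mid_unique {l r l' r' : ℚ} (h : IsSD l r) (h' : IsSD l' r')
    (hm : midQ (l, r) = midQ (l', r')) : l = l' ∧ r = r' := by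
  obtain ⟨m, k, hk, rfl, rfl⟩ := h
  obtain ⟨m', k', hk', rfl, rfl⟩ := h'
  have hmq : ((2*k+1 : ℕ):ℚ)/2^(m+1) = ((2*k'+1 : ℕ):ℚ)/2^(m'+1) := by
    simp only [midQ] at hm
    push_cast
    rw [pow_succ, pow_succ]
    field_simp at hm ⊢
    ring_nf at hm ⊢
    linarith
  have heq := frac_eq_nat hmq
  have o1 : Odd (2*k+1) := ⟨k, rfl⟩
  have o2 : Odd (2*k'+1) := ⟨k', rfl⟩
  obtain ⟨h1, h2⟩ := odd_mul_pow_inj o1 o2 heq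
  have hm' : m = m' := by omega
  have hkk : k = k' := by omega
  subst hm'; subst hkk
  exact ⟨rfl, rfl⟩
lemma pts_eq {n : ℕ} (I : SDPartition n) {X Y : Fin (n+1)} (h : (X:ℕ) = (Y:ℕ)) :
    I.pts X = I.pts Y := congrArg I.pts (Fin.ext h)

lemma pow_le_exp {u m : ℕ} (h : (1:ℚ)/2^m ≤ 1/2^u) : u ≤ m := by
  have h1 : (0:ℚ) < 2^u := by positivity
  have h2 : (0:ℚ) < 2^m := by positivity
  have := (div_le_div_iff₀ h2 h1).mp h
  have hle : (2:ℚ)^u ≤ 2^m := by linarith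
  exact (pow_le_pow_iff_right₀ (by norm_num : (1:ℚ) < 2)).mp hle

/-- every s.d. partition into at least two parts contains a caret:
two adjacent parts forming the two halves of an s.d. interval -/
lemma exists_caret (n : ℕ) (I : SDPartition (n+2)) :
    ∃ i : ℕ, ∃ h2 : i + 2 < n + 3,
      IsSD (I.pts ⟨i, by omega⟩) (I.pts ⟨i+2, h2⟩) ∧
      I.pts ⟨i+1, by omega⟩ = (I.pts ⟨i, by omega⟩ + I.pts ⟨i+2, h2⟩) / 2 := by
  obtain ⟨i₀, -, hmin⟩ := Finset.exists_min_image (Finset.univ : Finset (Fin (n+2)))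
    (fun j => I.pts j.succ - I.pts j.castSucc) ⟨0, Finset.mem_univ 0⟩
  obtain ⟨m, k, hk, ha, hb⟩ := I.sd i₀
  -- the minimal part has length < 1, so m ≥ 1
  have hlen : I.pts i₀.succ - I.pts i₀.castSucc = 1 / 2^m := by
    rw [ha, hb]; ring
  have hlt1 : I.pts i₀.succ - I.pts i₀.castSucc < 1 := by
    rcases Nat.eq_zero_or_pos (i₀ : ℕ) with h0 | h0
    · have hsl : i₀.succ < Fin.last (n+2) := by
        rw [Fin.lt_iff_val_lt_val, Fin.val_succ, Fin.val_last]; omega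
      have h1 : I.pts i₀.succ < 1 := I.last ▸ I.mono hsl
      have h2 : I.pts i₀.castSucc = 0 := by
        rw [pts_eq I (show ((i₀.castSucc : Fin (n+3)) : ℕ) = ((0 : Fin (n+3)) : ℕ) by simp [h0]), I.first]
      linarith
    · have h1 : I.pts i₀.succ ≤ 1 := by
        rcases eq_or_lt_of_le (Fin.le_last i₀.succ) with h | h
        · rw [h, I.last]
        · linarith [I.last ▸ I.mono h]
      have h2 : (0:ℚ) < I.pts i₀.castSucc := by
        have : (0 : Fin (n+3)) < i₀.castSucc := by
          rw [Fin.lt_iff_val_lt_val]; simpa using h0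
        calc (0:ℚ) = I.pts 0 := I.first.symm
        _ < _ := I.mono this
      linarith
  have hm1 : 1 ≤ m := by
    by_contra h
    have : m = 0 := by omega
    subst this
    rw [hlen] at hlt1
    norm_num at hlt1
  have h2m : (2:ℕ) ∣ 2^m := dvd_pow_self 2 (by omega)
  have h2m' : 2^m % 2 = 0 := Nat.eq_zero_of_dvd_of_lt h2m |> fun _ => Nat.mod_eq_zero_of_dvd h2m
  rcases Nat.even_or_odd k with hke | hko
  · -- k even : merge with the next part
    have hkm : k % 2 = 0 := Nat.even_iff.mp hke
    have hk2 : k + 2 ≤ 2^m := by omega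
    -- the next part exists
    have hnext : (i₀:ℕ) + 1 < n + 2 := by
      by_contra h
      have hval : ((i₀.succ : Fin (n+3)) : ℕ) = ((Fin.last (n+2) : Fin (n+3)) : ℕ) := by
        simp; omega
      have : ((k:ℚ)+1)/2^m = 1 := by rw [← hb, pts_eq I hval, I.last]
      rw [div_eq_one_iff_eq (by positivity)] at this
      have : ((k+1 : ℕ):ℚ) = ((2^m : ℕ):ℚ) := by push_cast; push_cast at this; linarith
      have := Nat.cast_injective this
      omega
    set j : Fin (n+2) := ⟨(i₀:ℕ)+1, hnext⟩ with hj
    obtain ⟨u, j', hj', hc1, hc2⟩ := I.sd j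
    have hcs : I.pts j.castSucc = I.pts i₀.succ := pts_eq I (by simp [hj])
    have hfrac : (j':ℚ)/2^u = ((k:ℚ)+1)/2^m := by rw [← hc1, hcs, hb]
    have hfrac' : ((j' : ℕ):ℚ)/2^u = ((k+1 : ℕ):ℚ)/2^m := by push_cast; push_cast at hfrac; linarith
    have hum : u ≤ m := by
      apply pow_le_exp
      have := hmin j (Finset.mem_univ j)
      rw [hlen] at this
      rw [hc1, hc2] at this
      calc (1:ℚ)/2^m ≤ _ := this
      _ = 1/2^u := by ring
    have hnat : j' * 2^m = (k+1) * 2^u := frac_eq_nat hfrac'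
    have hmu : m ≤ u := pow_le_of_odd_mul (by exact ⟨k/2, by omega⟩ : Odd (k+1)) ⟨j', by linarith⟩
    have hu : u = m := le_antisymm hum hmu
    subst hu
    have hj'k : j' = k + 1 := Nat.eq_of_mul_eq_mul_right ((by positivity)) hnat
    refine ⟨(i₀:ℕ), by omega, ?_, ?_⟩
    · -- IsSD of the union
      have e1 : I.pts ⟨(i₀:ℕ), by omega⟩ = (k:ℚ)/2^u := by
        rw [← ha]; exact pts_eq I (by simp)
      have e2 : I.pts ⟨(i₀:ℕ)+2, by omega⟩ = ((k:ℚ)+2)/2^u := by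
        rw [pts_eq I (show ((⟨(i₀:ℕ)+2, by omega⟩ : Fin (n+3)):ℕ) = ((j.succ : Fin (n+3)):ℕ) by simp [hj]), hc2, hj'k]
        push_cast; ring_nf
      rw [e1, e2]
      obtain ⟨m', rfl⟩ : ∃ m', u = m' + 1 := ⟨u - 1, by omega⟩
      obtain ⟨t, rfl⟩ := hke
      have hpow : (2:ℕ)^(m'+1) = 2 * 2^m' := by ring
      refine ⟨m', t, by omega, ?_, ?_⟩
      · push_cast; rw [pow_succ]; field_simp; ring
      · push_cast; rw [pow_succ]; field_simp; ring
    · have e0 : I.pts ⟨(i₀:ℕ), by omega⟩ = (k:ℚ)/2^u := by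
        rw [← ha]; exact pts_eq I (by simp)
      have e1 : I.pts ⟨(i₀:ℕ)+1, by omega⟩ = ((k:ℚ)+1)/2^u := by
        rw [← hb]; exact pts_eq I (by simp)
      have e2 : I.pts ⟨(i₀:ℕ)+2, by omega⟩ = ((k:ℚ)+2)/2^u := by
        rw [pts_eq I (show ((⟨(i₀:ℕ)+2, by omega⟩ : Fin (n+3)):ℕ) = ((j.succ : Fin (n+3)):ℕ) by simp [hj]), hc2, hj'k]
        push_cast; ring_nf
      rw [e0, e1, e2]; ring
  · -- k odd : merge with the previous part
    have hkm : k % 2 = 1 := Nat.odd_iff.mp hko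
    have hprev : 1 ≤ (i₀:ℕ) := by
      by_contra h
      have h0 : (i₀:ℕ) = 0 := by omega
      have : (k:ℚ)/2^m = 0 := by
        rw [← ha, pts_eq I (show ((i₀.castSucc : Fin (n+3)):ℕ) = ((0 : Fin (n+3)):ℕ) by simp [h0]), I.first]
      have : (k:ℚ) = 0 := by field_simp at this; exact_mod_cast this
      have : k = 0 := by exact_mod_cast this
      omega
    have hprevlt : (i₀:ℕ) - 1 < n + 2 := by omega
    set j : Fin (n+2) := ⟨(i₀:ℕ)-1, hprevlt⟩ with hj
    obtain ⟨u, j', hj', hc1, hc2⟩ := I.sd j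
    have hcs : I.pts j.succ = I.pts i₀.castSucc := pts_eq I (by simp [hj]; omega)
    have hfrac' : ((j'+1 : ℕ):ℚ)/2^u = ((k : ℕ):ℚ)/2^m := by
      push_cast
      rw [← hc2, hcs, ha]
    have hum : u ≤ m := by
      apply pow_le_exp
      have := hmin j (Finset.mem_univ j)
      rw [hlen] at this
      rw [hc1, hc2] at this
      calc (1:ℚ)/2^m ≤ _ := this
      _ = 1/2^u := by ring
    have hnat : (j'+1) * 2^m = k * 2^u := frac_eq_nat hfrac'
    have hmu : m ≤ u := pow_le_of_odd_mul hko ⟨j'+1, by linarith⟩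
    have hu : u = m := le_antisymm hum hmu
    subst hu
    have hj'k : j' + 1 = k := Nat.eq_of_mul_eq_mul_right ((by positivity)) hnat
    refine ⟨(i₀:ℕ)-1, by omega, ?_, ?_⟩
    · have e1 : I.pts ⟨(i₀:ℕ)-1, by omega⟩ = ((k:ℚ)-1)/2^u := by
        rw [pts_eq I (show ((⟨(i₀:ℕ)-1, by omega⟩ : Fin (n+3)):ℕ) = ((j.castSucc : Fin (n+3)):ℕ) by simp [hj]), hc1]
        have : (j' : ℚ) = (k:ℚ) - 1 := by
          have : ((j' : ℕ):ℚ) + 1 = ((k:ℕ):ℚ) := by exact_mod_cast congrArg (Nat.cast : ℕ → ℚ) hj'k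
          linarith
        rw [this]
      have e2 : I.pts ⟨(i₀:ℕ)-1+2, by omega⟩ = ((k:ℚ)+1)/2^u := by
        rw [pts_eq I (show ((⟨(i₀:ℕ)-1+2, by omega⟩ : Fin (n+3)):ℕ) = ((i₀.succ : Fin (n+3)):ℕ) by simp; omega), hb]
      rw [e1, e2]
      obtain ⟨m', rfl⟩ : ∃ m', u = m' + 1 := ⟨u - 1, by omega⟩
      obtain ⟨t, rfl⟩ := hko
      have hpow : (2:ℕ)^(m'+1) = 2 * 2^m' := by ring
      refine ⟨m', t, by omega, ?_, ?_⟩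
      · push_cast; rw [pow_succ]; field_simp; ring
      · push_cast; rw [pow_succ]; field_simp; ring
    · have e0 : I.pts ⟨(i₀:ℕ)-1, by omega⟩ = ((k:ℚ)-1)/2^u := by
        rw [pts_eq I (show ((⟨(i₀:ℕ)-1, by omega⟩ : Fin (n+3)):ℕ) = ((j.castSucc : Fin (n+3)):ℕ) by simp [hj]), hc1]
        have : (j' : ℚ) = (k:ℚ) - 1 := by
          have : ((j' : ℕ):ℚ) + 1 = ((k:ℕ):ℚ) := by exact_mod_cast congrArg (Nat.cast : ℕ → ℚ) hj'k
          linarith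
        rw [this]
      have e1 : I.pts ⟨(i₀:ℕ)-1+1, by omega⟩ = (k:ℚ)/2^u := by
        rw [← ha]; exact pts_eq I (by simp; omega)
      have e2 : I.pts ⟨(i₀:ℕ)-1+2, by omega⟩ = ((k:ℚ)+1)/2^u := by
        rw [pts_eq I (show ((⟨(i₀:ℕ)-1+2, by omega⟩ : Fin (n+3)):ℕ) = ((i₀.succ : Fin (n+3)):ℕ) by simp; omega), hb]
      rw [e0, e1, e2]; ring
lemma sd_mk {n : ℕ} (I : SDPartition n) (p : ℕ) (hp : p < n) :
    IsSD (I.pts ⟨p, by omega⟩) (I.pts ⟨p+1, by omega⟩) := by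
  have h := I.sd ⟨p, hp⟩
  have h1 : I.pts ((⟨p,hp⟩ : Fin n).castSucc) = I.pts ⟨p, by omega⟩ := pts_eq I (by simp)
  have h2 : I.pts ((⟨p,hp⟩ : Fin n).succ) = I.pts ⟨p+1, by omega⟩ := pts_eq I (by simp)
  rwa [h1, h2] at h

lemma pts_lt_mk {n : ℕ} (I : SDPartition n) {p q : ℕ} (hp : p < n+1) (hq : q < n+1)
    (h : p < q) : I.pts ⟨p, hp⟩ < I.pts ⟨q, hq⟩ := I.mono (by simp [Fin.lt_iff_val_lt_val, h])

lemma pts_inj {n : ℕ} (I : SDPartition n) {X Y : Fin (n+1)}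
    (h : I.pts X = I.pts Y) : X = Y := I.mono.injective h

/-- the breakpoint function after deleting breakpoint `i+1` -/
def delPts (n i : ℕ) (pts : Fin (n+3) → ℚ) : Fin (n+2) → ℚ :=
  fun j => pts ⟨if (j:ℕ) ≤ i then (j:ℕ) else (j:ℕ)+1, by split <;> omega⟩

lemma delPts_le {n i : ℕ} (pts : Fin (n+3) → ℚ) (j : Fin (n+2)) (h : (j:ℕ) ≤ i) :
    delPts n i pts j = pts ⟨(j:ℕ), by omega⟩ := by
  unfold delPts
  congr 1
  exact Fin.ext (by simp [h])

lemma delPts_gt {n i : ℕ} (pts : Fin (n+3) → ℚ) (j : Fin (n+2)) (h : i < (j:ℕ)) :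
    delPts n i pts j = pts ⟨(j:ℕ)+1, by omega⟩ := by
  unfold delPts
  congr 1
  exact Fin.ext (by simp [Nat.not_le.mpr h])

/-- the partition obtained by deleting the middle breakpoint of a caret -/
def delPart (n : ℕ) (I : SDPartition (n+2)) (i : ℕ) (hi : i + 2 < n + 3)
    (hsd : IsSD (I.pts ⟨i, by omega⟩) (I.pts ⟨i+2, hi⟩)) : SDPartition (n+1) where
  pts := delPts n i I.pts
  first := by
    rw [delPts_le I.pts 0 (by simp)]
    rw [pts_eq I (Y := 0) (by simp), I.first]
  last := by
    rw [delPts_gt I.pts (Fin.last (n+1)) (by simp; omega)]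
    rw [pts_eq I (Y := Fin.last (n+2)) (by simp), I.last]
  mono := by
    intro x y hxy
    unfold delPts
    apply I.mono
    rw [Fin.lt_iff_val_lt_val] at hxy ⊢
    simp only
    split <;> split <;> omega
  sd := by
    intro jj
    have hc : ((jj.castSucc : Fin (n+2)) : ℕ) = (jj:ℕ) := by simp
    have hsucc : ((jj.succ : Fin (n+2)) : ℕ) = (jj:ℕ)+1 := by simp
    rcases lt_trichotomy ((jj:ℕ)+1) (i+1) with h | h | h
    · rw [delPts_le I.pts jj.castSucc (by omega), delPts_le I.pts jj.succ (by omega)]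
      have := sd_mk I (jj:ℕ) (by omega)
      convert this using 2 <;> simp
    · -- jj = i : the merged interval
      rw [delPts_le I.pts jj.castSucc (by omega), delPts_gt I.pts jj.succ (by omega)]
      have e1 : I.pts ⟨((jj.castSucc : Fin (n+2)):ℕ), by omega⟩ = I.pts ⟨i, by omega⟩ :=
        pts_eq I (by simp; omega)
      have e2 : I.pts ⟨((jj.succ : Fin (n+2)):ℕ)+1, by omega⟩ = I.pts ⟨i+2, hi⟩ :=
        pts_eq I (by simp; omega)
      rw [e1, e2]
      exact hsd
    · rw [delPts_gt I.pts jj.castSucc (by omega), delPts_gt I.pts jj.succ (by omega)]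
      have := sd_mk I ((jj:ℕ)+1) (by omega)
      convert this using 2 <;> simp
lemma old_pt (k i : ℕ) (I : SDPartition (k+2)) (hi : i+2 < k+3) (p : Fin (k+3))
    (hp : (p:ℕ) ≠ i+1) :
    ∃ p' : Fin (k+2), delPts k i I.pts p' = I.pts p ∧
      (((p:ℕ) ≤ i ∧ (p':ℕ) = (p:ℕ)) ∨ ((i+1 < (p:ℕ)) ∧ (p':ℕ) = (p:ℕ)-1)) := by
  rcases le_or_gt (p:ℕ) i with h | h
  · refine ⟨⟨(p:ℕ), by omega⟩, ?_, Or.inl ⟨h, rfl⟩⟩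
    rw [delPts_le (n := k) I.pts _ h]
  · have h2 : i+1 < (p:ℕ) := by omega
    refine ⟨⟨(p:ℕ)-1, by omega⟩, ?_, Or.inr ⟨h2, rfl⟩⟩
    rw [delPts_gt _ _ (show i < ((⟨(p:ℕ)-1, by omega⟩ : Fin (k+2)):ℕ) by simp; omega)]
    exact pts_eq I (by simp; omega)

lemma new_pt (k i : ℕ) (I : SDPartition (k+2)) (hi : i+2 < k+3) (p : Fin (k+2)) :
    ∃ P : Fin (k+3), I.pts P = delPts k i I.pts p ∧
      (((p:ℕ) ≤ i ∧ (P:ℕ) = (p:ℕ)) ∨ ((i < (p:ℕ)) ∧ (P:ℕ) = (p:ℕ)+1)) := by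
  rcases le_or_gt (p:ℕ) i with h | h
  · exact ⟨⟨(p:ℕ), by omega⟩, (delPts_le (n := k) I.pts _ h).symm, Or.inl ⟨h, rfl⟩⟩
  · exact ⟨⟨(p:ℕ)+1, by omega⟩, (delPts_gt _ _ h).symm, Or.inr ⟨h, rfl⟩⟩
lemma sd_zero_one : IsSD (0:ℚ) 1 := ⟨0, 0, by norm_num, by norm_num, by norm_num⟩

lemma base_case (I : SDPartition 1) (s : ℚ × ℚ → ℤ) (hs : SignSpec s) :
    ({A ∈ SRIn I | s A = 1}).ncard =
      ({q : ℚ | (∃ p : Fin 2, I.pts p = q) ∧ q ≠ 0 ∧ q ≠ 1 ∧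
          ∃ A ∈ SDSet, midQ A = q ∧ s A = -1}).ncard + 1 := by
  have h0 : I.pts 0 = 0 := I.first
  have h1 : I.pts 1 = 1 := I.last
  have hL : {A ∈ SRIn I | s A = 1} = {((0:ℚ), (1:ℚ))} := by
    ext A
    simp only [Set.mem_setOf_eq, Set.mem_singleton_iff]
    constructor
    · rintro ⟨⟨⟨⟨p, q, hpq, hA⟩, -⟩, -⟩, -⟩
      have hv := Fin.lt_iff_val_lt_val.mp hpq
      have hp : p = 0 := Fin.ext (by simp only [Fin.val_zero]; omega)
      have hq : q = 1 := Fin.ext (by simp only [Fin.val_one]; omega)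
      rw [hA, hp, hq, h0, h1]
    · rintro rfl
      exact ⟨⟨⟨⟨0, 1, by simp [Fin.lt_iff_val_lt_val], by rw [h0, h1]⟩, sd_zero_one⟩,
        Or.inl ⟨rfl, rfl⟩⟩, hs.2.1⟩
  have hR : {q : ℚ | (∃ p : Fin 2, I.pts p = q) ∧ q ≠ 0 ∧ q ≠ 1 ∧
      ∃ A ∈ SDSet, midQ A = q ∧ s A = -1} = ∅ := by
    ext q
    simp only [Set.mem_setOf_eq, Set.mem_empty_iff_false, iff_false, not_and]
    rintro ⟨p, rfl⟩ hq0 hq1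
    exfalso
    rcases Fin.exists_fin_two.mp ⟨p, rfl⟩ with h | h
    all_goals {
      rcases (by omega : (p:ℕ) = 0 ∨ (p:ℕ) = 1) with hp | hp
      · exact hq0 (by rw [pts_eq I (Y := 0) (by simp [hp]), h0])
      · exact hq1 (by rw [pts_eq I (Y := 1) (by simp [hp]), h1])
    }
  rw [hL, hR]
  simp
theorem aux_main (k : ℕ) : ∀ (I : SDPartition (k+1)) (s : ℚ × ℚ → ℤ), SignSpec s →
    ({A ∈ SRIn I | s A = 1}).ncard =
      ({q : ℚ | (∃ p : Fin (k+2), I.pts p = q) ∧ q ≠ 0 ∧ q ≠ 1 ∧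
          ∃ A ∈ SDSet, midQ A = q ∧ s A = -1}).ncard + 1 := by
  induction k with
  | zero => exact base_case
  | succ k IH =>
    intro I s hs
    obtain ⟨i, hi, hsd0, hmid0⟩ := exists_caret k I
    set a := I.pts ⟨i, by omega⟩ with ha_def
    set b := I.pts ⟨i+1, by omega⟩ with hb_def
    set c := I.pts ⟨i+2, hi⟩ with hc_def
    have hsd : IsSD a c := hsd0
    have hmid : b = (a + c) / 2 := hmid0
    clear hsd0 hmid0
    obtain ⟨m, kk, hkk, haa, hcc⟩ := id hsd
    have hbb : b = (2*(kk:ℚ)+1)/2^(m+1) := by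
      rw [hmid, haa, hcc, pow_succ]; field_simp; ring
    have hac : a < c := hsd.lt
    have hab : a < b := by rw [hmid]; linarith
    have hbc : b < c := by rw [hmid]; linarith
    have h0a : (0:ℚ) ≤ a := hsd.nonneg
    have hc1 : c ≤ 1 := hsd.le_one
    have hb0 : b ≠ 0 := by linarith
    have hb1 : b ≠ 1 := by linarith
    have h2m1 : (2:ℕ)^(m+1) = 2 * 2^m := by ring
    -- the two halves
    have hP2sd : IsSD b c := by
      refine ⟨m+1, 2*kk+1, by omega, by push_cast; exact hbb, ?_⟩
      rw [hcc, pow_succ]; push_cast; field_simp; ring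
    have hP1left : IsLeftSD a b := by
      refine ⟨m+1, 2*kk, by omega, by omega, ⟨kk, by ring⟩, ?_, ?_⟩
      · rw [haa, pow_succ]; push_cast; field_simp
      · rw [hbb]; push_cast; ring
    have hP2right : IsRightSD b c := by
      refine Or.inr ⟨m+1, 2*kk+1, by omega, by omega, ⟨kk, rfl⟩, by push_cast; exact hbb, ?_⟩
      rw [hcc, pow_succ]; push_cast; field_simp; ring
    -- sign relations
    have hsac : s (a, c) = 1 ∨ s (a, c) = -1 := hs.1 (a, c) hsd
    have hjoin : sdJoin (b, c) (conjSD (b, c)) = (a, c) := by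
      have hnotleft : ¬ IsLeftSD (b, c).1 (b, c).2 := fun hL => not_left_and_right hL hP2right
      have h2bc : 2*b - c = a := by rw [hmid]; ring
      simp only [conjSD, hnotleft, if_false, sdJoin]
      simp only [Prod.mk.injEq]
      constructor
      · simp only [h2bc]
        exact min_eq_right (le_of_lt hab)
      · exact max_eq_left (le_of_lt hbc)
    have hsbc : s (b, c) = - s (a, c) := by
      have hne : ((b, c) : ℚ × ℚ) ≠ ((0:ℚ), (1:ℚ)) := fun h => hb0 (congrArg Prod.fst h)
      rw [(hs.2.2 (b, c) hP2sd hne).2 hP2right, hjoin]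
    -- the coarser partition
    set I' := delPart k I i hi hsd with hI'def
    have hI'pts : I'.pts = delPts k i I.pts := rfl
    have b_ne_old : ∀ p : Fin (k+2), I'.pts p ≠ b := by
      intro p hp
      obtain ⟨P, hPe, hPv⟩ := new_pt k i I hi p
      rw [hI'pts, ← hPe] at hp
      have hPval : (P:ℕ) = i+1 := congrArg Fin.val (pts_inj I (hp.trans hb_def))
      rcases hPv with ⟨h1, e⟩ | ⟨h1, e⟩ <;> omega
    have force : ∀ (u j : ℕ), (j:ℚ)/2^u = b → m+1 ≤ u := by
      intro u j h
      have h' : ((j:ℕ):ℚ)/2^u = ((2*kk+1:ℕ):ℚ)/2^(m+1) := by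
        push_cast
        rw [h, hbb]
      have hnat := frac_eq_nat h'
      exact pow_le_of_odd_mul (⟨kk, rfl⟩ : Odd (2*kk+1)) ⟨j, by linarith⟩
    have hba : b - a = 1/2^(m+1) := by rw [hbb, haa, pow_succ]; field_simp; ring
    have hcb : c - b = 1/2^(m+1) := by rw [hbb, hcc, pow_succ]; field_simp; ring
    have hupow : ∀ u : ℕ, m+1 ≤ u → (1:ℚ)/2^u ≤ 1/2^(m+1) :=
      fun u hu => one_div_le_one_div_of_le (by positivity)
        (pow_le_pow_right₀ (by norm_num) hu)
    have hpeq : ∀ u : ℕ, (1:ℚ)/2^u = 1/2^(m+1) → u = m+1 := by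
      intro u h
      apply pow_inj_q
      rw [div_eq_div_iff (by positivity) (by positivity)] at h
      linarith
    have hSR : SRIn I = insert (b, c) (SRIn I') := by
      ext A
      constructor
      · rintro ⟨⟨⟨p, q, hpq, hA⟩, hAsd⟩, hAr⟩
        obtain ⟨u, j, hj, hl, hr⟩ := id hAsd
        have hpqv := Fin.lt_iff_val_lt_val.mp hpq
        by_cases hqv : (q:ℕ) = i+1
        · exfalso
          have hA2 : A.2 = b := by
            rw [hA, hb_def]; exact pts_eq I (by simp [hqv])
          have hu : m+1 ≤ u := by
            apply force u (j+1)
            push_cast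
            rw [← hr, hA2]
          have h1u : (1:ℚ)/2^u ≤ 1/2^(m+1) := hupow u hu
          have hjb : (j:ℚ)/2^u = b - 1/2^u := by
            rw [← hA2, hr]; ring
          have hage : a ≤ A.1 := by rw [hl, hjb]; linarith
          have halt : A.1 < b := by
            rw [hl, hjb]
            have : (0:ℚ) < 1/2^u := by positivity
            linarith
          have hpge : i ≤ (p:ℕ) := by
            have h' : a ≤ I.pts p := by rw [hA] at hage; exact hage
            have hle : (⟨i, by omega⟩ : Fin (k+3)) ≤ p := I.mono.le_iff_le.mp (ha_def ▸ h')
            exact Fin.le_def.mp hle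
          have hplt : (p:ℕ) < i+1 := by
            have h' : I.pts p < b := by rw [hA] at halt; exact halt
            have hlt : p < (⟨i+1, by omega⟩ : Fin (k+3)) := I.mono.lt_iff_lt.mp (hb_def ▸ h')
            exact Fin.lt_def.mp hlt
          have hpv : (p:ℕ) = i := by omega
          have hA1 : A.1 = a := by rw [hA, ha_def]; exact pts_eq I (by simp [hpv])
          have hueq : u = m+1 := by
            apply hpeq
            have : (j:ℚ)/2^u = b - 1/2^(m+1) := by
              rw [← hl, hA1]; linarith
            rw [hjb] at this
            linarith
          have hAab : A = (a, b) := Prod.ext_iff.mpr ⟨hA1, hA2⟩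
          rw [hAab] at hAr
          exact not_left_and_right hP1left hAr
        · by_cases hpv : (p:ℕ) = i+1
          · -- A = (b, c)
            have hA1 : A.1 = b := by rw [hA, hb_def]; exact pts_eq I (by simp [hpv])
            have hu : m+1 ≤ u := force u j (by rw [← hl, hA1])
            have h1u : (1:ℚ)/2^u ≤ 1/2^(m+1) := hupow u hu
            have hA2e : A.2 = b + 1/2^u := by
              rw [hr, ← hA1, hl]; ring
            have hA2le : A.2 ≤ c := by rw [hA2e]; linarith
            have hA2gt : b < A.2 := by
              rw [hA2e]
              have : (0:ℚ) < 1/2^u := by positivity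
              linarith
            have hqge : i+1 < (q:ℕ) := by
              have h' : b < I.pts q := by rw [hA] at hA2gt; exact hA2gt
              have hlt : (⟨i+1, by omega⟩ : Fin (k+3)) < q := I.mono.lt_iff_lt.mp (hb_def ▸ h')
              exact Fin.lt_def.mp hlt
            have hqle : (q:ℕ) ≤ i+2 := by
              have h' : I.pts q ≤ c := by rw [hA] at hA2le; exact hA2le
              have hle : q ≤ (⟨i+2, by omega⟩ : Fin (k+3)) := I.mono.le_iff_le.mp (hc_def ▸ h')
              exact Fin.le_def.mp hle
            have hqv2 : (q:ℕ) = i+2 := by omega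
            have hA2 : A.2 = c := by rw [hA, hc_def]; exact pts_eq I (by simp [hqv2])
            have hAbc : A = (b, c) := Prod.ext_iff.mpr ⟨hA1, hA2⟩
            rw [hAbc]
            exact Set.mem_insert _ _
          · -- A survives in I'
            obtain ⟨p', hp'e, hp'v⟩ := old_pt k i I hi p hpv
            obtain ⟨q', hq'e, hq'v⟩ := old_pt k i I hi q hqv
            apply Set.mem_insert_of_mem
            refine ⟨⟨⟨p', q', Fin.lt_iff_val_lt_val.mpr ?_, ?_⟩, hAsd⟩, hAr⟩
            · rcases hp'v with ⟨h1, e⟩ | ⟨h1, e⟩ <;> rcases hq'v with ⟨h2, e2⟩ | ⟨h2, e2⟩ <;> omega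
            · rw [hA, hI'pts, hp'e, hq'e]
      · intro hA
        rcases Set.mem_insert_iff.mp hA with rfl | hA'
        · refine ⟨⟨⟨⟨i+1, by omega⟩, ⟨i+2, by omega⟩, Fin.mk_lt_mk.mpr (by omega), ?_⟩, hP2sd⟩, hP2right⟩
          rw [hb_def, hc_def]
        · obtain ⟨⟨⟨p, q, hpq, hA⟩, hAsd⟩, hAr⟩ := hA'
          obtain ⟨P, hPe, hPv⟩ := new_pt k i I hi p
          obtain ⟨Q, hQe, hQv⟩ := new_pt k i I hi q
          refine ⟨⟨⟨P, Q, Fin.lt_iff_val_lt_val.mpr ?_, ?_⟩, hAsd⟩, hAr⟩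
          · have := Fin.lt_iff_val_lt_val.mp hpq
            rcases hPv with ⟨h1, e⟩ | ⟨h1, e⟩ <;> rcases hQv with ⟨h2, e2⟩ | ⟨h2, e2⟩ <;> omega
          · rw [hA, hI'pts, ← hPe, ← hQe]
    have hBP : ∀ x : ℚ, (∃ p : Fin (k+3), I.pts p = x) ↔
        (x = b ∨ ∃ p : Fin (k+2), I'.pts p = x) := by
      intro x
      constructor
      · rintro ⟨p, rfl⟩
        by_cases hp : (p:ℕ) = i+1
        · left; rw [hb_def]; exact pts_eq I (by simp [hp])
        · right
          obtain ⟨p', he, -⟩ := old_pt k i I hi p hp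
          exact ⟨p', he⟩
      · rintro (rfl | ⟨p, rfl⟩)
        · exact ⟨⟨i+1, by omega⟩, hb_def.symm⟩
        · obtain ⟨P, he, -⟩ := new_pt k i I hi p
          exact ⟨P, he⟩
    have hmidb : ∀ A : ℚ × ℚ, A ∈ SDSet → midQ A = b → A = (a, c) := by
      intro A hA hmA
      have h := sd_mid_unique (hA : IsSD A.1 A.2) hsd
        (by rw [show midQ (A.1, A.2) = midQ A from rfl, hmA, hmid]; rfl)
      exact Prod.ext_iff.mpr ⟨h.1, h.2⟩
    have hfinL : {A ∈ SRIn I' | s A = 1}.Finite := by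
      apply Set.Finite.subset (Set.finite_range
        (fun pq : Fin (k+2) × Fin (k+2) => (I'.pts pq.1, I'.pts pq.2)))
      rintro A ⟨⟨⟨⟨p, q, -, hA⟩, -⟩, -⟩, -⟩
      exact ⟨(p, q), hA.symm⟩
    have hfinR : {x : ℚ | (∃ p : Fin (k+2), I'.pts p = x) ∧ x ≠ 0 ∧ x ≠ 1 ∧
        ∃ A ∈ SDSet, midQ A = x ∧ s A = -1}.Finite := by
      apply Set.Finite.subset (Set.finite_range I'.pts)
      rintro x ⟨⟨p, hp⟩, -⟩
      exact ⟨p, hp⟩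
    have hP2notin : ((b, c) : ℚ × ℚ) ∉ {A ∈ SRIn I' | s A = 1} := by
      rintro ⟨⟨⟨⟨p, q, -, hA⟩, -⟩, -⟩, -⟩
      exact b_ne_old p (congrArg Prod.fst hA).symm
    have hbnotin : b ∉ {x : ℚ | (∃ p : Fin (k+2), I'.pts p = x) ∧ x ≠ 0 ∧ x ≠ 1 ∧
        ∃ A ∈ SDSet, midQ A = x ∧ s A = -1} := by
      rintro ⟨⟨p, hp⟩, -⟩
      exact b_ne_old p hp
    rcases hsac with h1 | h1
    · -- s (a,c) = 1 : nothing changes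
      have hsbc1 : s (b, c) = -1 := by rw [hsbc, h1]
      have hLeq : {A ∈ SRIn I | s A = 1} = {A ∈ SRIn I' | s A = 1} := by
        ext A
        constructor
        · rintro ⟨hmem, hsA⟩
          rw [hSR] at hmem
          rcases Set.mem_insert_iff.mp hmem with rfl | h
          · rw [hsbc1] at hsA; norm_num at hsA
          · exact ⟨h, hsA⟩
        · rintro ⟨hmem, hsA⟩
          exact ⟨by rw [hSR]; exact Set.mem_insert_of_mem _ hmem, hsA⟩
      have hReq : {x : ℚ | (∃ p : Fin (k+3), I.pts p = x) ∧ x ≠ 0 ∧ x ≠ 1 ∧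
            ∃ A ∈ SDSet, midQ A = x ∧ s A = -1} =
          {x : ℚ | (∃ p : Fin (k+2), I'.pts p = x) ∧ x ≠ 0 ∧ x ≠ 1 ∧
            ∃ A ∈ SDSet, midQ A = x ∧ s A = -1} := by
        ext x
        constructor
        · rintro ⟨hbp, hx0, hx1, A, hA, hmA, hsA⟩
          rcases (hBP x).mp hbp with rfl | hold
          · exfalso
            rw [hmidb A hA hmA, h1] at hsA
            norm_num at hsA
          · exact ⟨hold, hx0, hx1, A, hA, hmA, hsA⟩
        · rintro ⟨⟨p, hp⟩, rest⟩
          exact ⟨(hBP x).mpr (Or.inr ⟨p, hp⟩), rest⟩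
      rw [hLeq, hReq]
      exact IH I' s hs
    · -- s (a,c) = -1 : both sides gain one element
      have hsbc1 : s (b, c) = 1 := by rw [hsbc, h1]; norm_num
      have hLeq : {A ∈ SRIn I | s A = 1} = insert (b, c) {A ∈ SRIn I' | s A = 1} := by
        ext A
        constructor
        · rintro ⟨hmem, hsA⟩
          rw [hSR] at hmem
          rcases Set.mem_insert_iff.mp hmem with rfl | h
          · exact Set.mem_insert _ _
          · exact Set.mem_insert_of_mem _ ⟨h, hsA⟩
        · intro hmem
          rcases Set.mem_insert_iff.mp hmem with rfl | hm
          · exact ⟨by rw [hSR]; exact Set.mem_insert _ _, hsbc1⟩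
          · obtain ⟨h, hsA⟩ := hm
            exact ⟨by rw [hSR]; exact Set.mem_insert_of_mem _ h, hsA⟩
      have hReq : {x : ℚ | (∃ p : Fin (k+3), I.pts p = x) ∧ x ≠ 0 ∧ x ≠ 1 ∧
            ∃ A ∈ SDSet, midQ A = x ∧ s A = -1} =
          insert b {x : ℚ | (∃ p : Fin (k+2), I'.pts p = x) ∧ x ≠ 0 ∧ x ≠ 1 ∧
            ∃ A ∈ SDSet, midQ A = x ∧ s A = -1} := by
        ext x
        constructor
        · rintro ⟨hbp, hx0, hx1, A, hA, hmA, hsA⟩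
          rcases (hBP x).mp hbp with rfl | hold
          · exact Set.mem_insert _ _
          · exact Set.mem_insert_of_mem _ ⟨hold, hx0, hx1, A, hA, hmA, hsA⟩
        · intro hmem
          rcases Set.mem_insert_iff.mp hmem with rfl | hm
          · exact ⟨(hBP b).mpr (Or.inl rfl), hb0, hb1, (a, c), hsd,
              (show midQ (a, c) = b from hmid.symm), h1⟩
          · obtain ⟨⟨p, hp⟩, rest⟩ := hm
            exact ⟨(hBP x).mpr (Or.inr ⟨p, hp⟩), rest⟩
      rw [hLeq, hReq, Set.ncard_insert_of_notMem hP2notin hfinL,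
        Set.ncard_insert_of_notMem hbnotin hfinR, IH I' s hs]
/-- the number of intervals of `S_R(I)` with sign `+1` equals one
plus the number of breakpoints `a` of `I` with `0 < a < 1` whose sign is `-1`
(the sign of `a` being that of the standard dyadic interval with midpoint `a`). -/
theorem statement_18 {n : ℕ} (I : SDPartition n) (s : ℚ × ℚ → ℤ)
    (hs : SignSpec s) :
    ({A ∈ SRIn I | s A = 1}).ncard =
      ({q : ℚ | (∃ i : Fin (n + 1), I.pts i = q) ∧ q ≠ 0 ∧ q ≠ 1 ∧
          ∃ A ∈ SDSet, midQ A = q ∧ s A = -1}).ncard + 1 := by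
  cases n with
  | zero =>
    exfalso
    have h0 := I.first
    have h1 := I.last
    have hlast : (Fin.last 0) = (0 : Fin 1) := by
      apply Fin.ext; simp
    rw [hlast, h0] at h1
    norm_num at h1
  | succ k => exact aux_main k I s hs
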